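/- Let T be a tree on a finite nonempty vertex type V with n = |V| vertices, and let m be an integer such that every vertex of T has degree at most m. Let G be the m-order V-fractal graph of T. Then the Wiener index of G satisfies W(G) = 3(m+1)^2·W(T) + (m−2)(m+1)·n^2 + (m+2)·n. -/

import Mathlib

open SimpleGraph Finset

/-- The Wiener index of a finite simple graph: half the sum of the graph
distances over all ordered pairs of vertices. -/
noncomputable def wienerIndex {V : Type*} [Fintype V] (G : SimpleGraph V) : ℚ :=
  (∑ u : V, ∑ v : V, (G.dist u v : ℚ)) / 2

/-- The `m`-order V-fractal graph of `T`: insert two midpoint vertices on every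
edge of `T` (one for each dart) and attach `m - deg_T v` pendant leaves to every
original vertex `v`, so that every original vertex gets degree exactly `m`. -/
def vFractal {V : Type*} [Fintype V] (T : SimpleGraph V) [DecidableRel T.Adj] (m : ℕ) :
    SimpleGraph (V ⊕ (T.Dart ⊕ (Σ v : V, Fin (m - T.degree v)))) :=
  SimpleGraph.fromRel (fun x y =>
    match x, y with
    | Sum.inl u, Sum.inr (Sum.inl d) => d.fst = u
    | Sum.inr (Sum.inl d), Sum.inr (Sum.inl d') => d' = d.symm
    | Sum.inl u, Sum.inr (Sum.inr p) => u = p.1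
    | _, _ => False)

namespace WVF

section TreeLemmas
variable {V : Type*} [DecidableEq V] {T : SimpleGraph V}

lemma dist_add_of_mem_shortest {u v z : V} (p : T.Walk u v) (hp : p.length = T.dist u v)
    (hz : z ∈ p.support) : T.dist u z + T.dist z v = T.dist u v := by
  have h1 := T.dist_le (p.takeUntil z hz)
  have h2 := T.dist_le (p.dropUntil z hz)
  have h3 : (p.takeUntil z hz).length + (p.dropUntil z hz).length = p.length := by
    rw [← congrArg Walk.length (p.take_spec hz), Walk.length_append]
  have hr1 : T.Reachable u z := ⟨p.takeUntil z hz⟩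
  have hr2 : T.Reachable z v := ⟨p.dropUntil z hz⟩
  obtain ⟨q1, hq1⟩ := hr1.exists_walk_length_eq_dist
  obtain ⟨q2, hq2⟩ := hr2.exists_walk_length_eq_dist
  have := T.dist_le (q1.append q2)
  rw [Walk.length_append, hq1, hq2] at this
  omega

lemma tree_dist_dichotomy (hT : T.IsTree) {t h : V} (hadj : T.Adj t h) (w : V) :
    T.dist w t + 1 = T.dist w h ∨ T.dist w h + 1 = T.dist w t := by
  have hc := hT.isConnected
  have htr1 : T.dist w h ≤ T.dist w t + 1 := by
    obtain ⟨p, hp⟩ := (hc w t).exists_walk_length_eq_dist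
    have := T.dist_le (p.concat hadj)
    rwa [Walk.length_concat, hp] at this
  have htr2 : T.dist w t ≤ T.dist w h + 1 := by
    obtain ⟨p, hp⟩ := (hc w h).exists_walk_length_eq_dist
    have := T.dist_le (p.concat hadj.symm)
    rwa [Walk.length_concat, hp] at this
  have hne : T.dist w t ≠ T.dist w h := by
    intro heq
    obtain ⟨p, hpp, hp⟩ := (hc w t).exists_path_of_dist
    by_cases hh : h ∈ p.support
    · have := dist_add_of_mem_shortest p hp hh
      have hth : T.dist h t = 1 := by
        rw [dist_eq_one_iff_adj]; exact hadj.symm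
      omega
    · have hq : (p.concat hadj).IsPath := by
        rw [← Walk.reverse_reverse (p.concat hadj), Walk.reverse_concat]
        exact ((hpp.reverse).cons (by simpa using hh)).reverse
      obtain ⟨q, hqp, hqd⟩ := (hc w h).exists_path_of_dist
      have hlen : (p.concat hadj).length = T.dist w t + 1 := by
        rw [Walk.length_concat, hp]
      have huniq := hT.existsUnique_path w h
      have := huniq.unique hq hqp
      rw [this] at hlen
      omega
  omega

lemma exists_adj_closer (hc : T.Connected) {u v : V} (hne : u ≠ v) :
    ∃ w, T.Adj u w ∧ T.dist w v + 1 = T.dist u v := by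
  obtain ⟨p, hp⟩ := (hc u v).exists_walk_length_eq_dist
  have hd : 0 < T.dist u v := hc.pos_dist_of_ne hne
  cases p with
  | nil => exact absurd rfl hne
  | @cons _ w _ hadj q =>
    refine ⟨w, hadj, ?_⟩
    have h1 := T.dist_le q
    obtain ⟨r, hr⟩ := (hc w v).exists_walk_length_eq_dist
    have h2 := T.dist_le (Walk.cons hadj r)
    simp only [Walk.length_cons] at h2 hp
    omega

lemma tree_dist_cross (hT : T.IsTree) {t h u v : V} (hadj : T.Adj t h)
    (hu : T.dist u t < T.dist u h) (hv : T.dist v h < T.dist v t) :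
    T.dist u v = T.dist u t + 1 + T.dist h v := by
  have hc := hT.isConnected
  obtain ⟨p, hpp, hp⟩ := (hc u t).exists_path_of_dist
  obtain ⟨q, hqp, hq⟩ := (hc h v).exists_path_of_dist
  have hq' : q.length = T.dist h v := hq
  have hdisj : ∀ z, z ∈ p.support → z ∈ q.support → False := by
    intro z hzp hzq
    have h1 := dist_add_of_mem_shortest p hp hzp
    have h2 := dist_add_of_mem_shortest q hq hzq
    have e1 : T.dist u h ≤ T.dist u z + T.dist z h := hc.dist_triangle
    have e2 : T.dist v t ≤ T.dist v z + T.dist z t := hc.dist_triangle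
    have c1 : T.dist h z = T.dist z h := T.dist_comm
    have c2 : T.dist z v = T.dist v z := T.dist_comm
    have d1 := tree_dist_dichotomy hT hadj z
    have d2 := tree_dist_dichotomy hT hadj u
    have d3 := tree_dist_dichotomy hT hadj v
    have c3 : T.dist v h = T.dist h v := T.dist_comm
    omega
  let r : T.Walk u v := p.append (Walk.cons hadj q)
  have hrp : r.IsPath := by
    rw [Walk.isPath_def]
    have : r.support = p.support ++ q.support := by
      simp [r, Walk.support_append]
    rw [this, List.nodup_append]
    exact ⟨hpp.support_nodup, hqp.support_nodup, fun z hz z' hz' hzz => hdisj z hz (by rw [hzz]; exact hz')⟩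
  have hrl : r.length = T.dist u t + 1 + T.dist h v := by
    simp [r, Walk.length_append, hp, hq']; omega
  obtain ⟨s, hsp, hs⟩ := (hc u v).exists_path_of_dist
  have := (hT.existsUnique_path u v).unique hrp hsp
  rw [this, hs] at hrl
  omega

lemma ind_cross (hT : T.IsTree) {t h t' h' : V} (h2 : T.Adj t' h')
    (ha : T.dist t h' < T.dist t t') (hb : T.dist h t' < T.dist h h')
    (hth : T.dist h t = 1) : h = t' ∧ t = h' := by
  have := tree_dist_cross hT h2 hb ha
  have c1 : T.dist h' t = T.dist t h' := T.dist_comm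
  have e1 : t = h' := (hT.isConnected.dist_eq_zero_iff).mp (by omega)
  have e2 : h = t' := (hT.isConnected.dist_eq_zero_iff).mp (by omega)
  exact ⟨e2, e1⟩

end TreeLemmas

section Frac
variable {V : Type*} [Fintype V] [DecidableEq V] {T : SimpleGraph V} [DecidableRel T.Adj] {m : ℕ}

@[simp] lemma dart_symm_fst (d : T.Dart) : d.symm.fst = d.snd := rfl
@[simp] lemma dart_symm_snd (d : T.Dart) : d.symm.snd = d.fst := rfl

def anc : (V ⊕ (T.Dart ⊕ (Σ v : V, Fin (m - T.degree v)))) → V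
  | Sum.inl u => u
  | Sum.inr (Sum.inl d) => d.fst
  | Sum.inr (Sum.inr p) => p.1

def cst : (V ⊕ (T.Dart ⊕ (Σ v : V, Fin (m - T.degree v)))) → ℕ
  | Sum.inl _ => 0
  | _ => 1

noncomputable def ind : (V ⊕ (T.Dart ⊕ (Σ v : V, Fin (m - T.degree v)))) → V → ℕ
  | Sum.inr (Sum.inl d), w => if T.dist w d.snd < T.dist w d.fst then 1 else 0
  | _, _ => 0

noncomputable def D (x y : (V ⊕ (T.Dart ⊕ (Σ v : V, Fin (m - T.degree v))))) : ℕ :=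
  if x = y then 0 else
    3 * T.dist (anc x) (anc y) + cst x + cst y - 2 * ind x (anc y) - 2 * ind y (anc x)

lemma D_self (x : (V ⊕ (T.Dart ⊕ (Σ v : V, Fin (m - T.degree v))))) : D x x = 0 := by
  simp [D]

lemma D_comm (x y : (V ⊕ (T.Dart ⊕ (Σ v : V, Fin (m - T.degree v))))) : D x y = D y x := by
  unfold D
  split_ifs with h1 h2 h2
  · rfl
  · exact absurd h1.symm h2
  · exact absurd h2.symm h1
  · rw [T.dist_comm]; omega

lemma D_inl_inl (u v : V) : D (T := T) (m := m) (.inl u) (.inl v) = 3 * T.dist u v := by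
  unfold D
  split_ifs with h
  · simp only [Sum.inl.injEq] at h; simp [h]
  · simp only [Sum.inl.injEq] at h
    simp [anc, cst, ind]

lemma D_inl_dart (u : V) (d : T.Dart) :
    D (T := T) (m := m) (.inl u) (.inr (.inl d)) =
      3 * T.dist u d.fst + 1 - 2 * (if T.dist u d.snd < T.dist u d.fst then 1 else 0) := by
  unfold D
  rw [if_neg (by simp)]
  simp [anc, cst, ind]
  grind

lemma D_inl_leaf (u : V) (p : Σ v : V, Fin (m - T.degree v)) :
    D (T := T) (m := m) (.inl u) (.inr (.inr p)) = 3 * T.dist u p.1 + 1 := by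
  unfold D
  rw [if_neg (by simp)]
  simp [anc, cst, ind]

lemma D_dart_dart (d e : T.Dart) :
    D (T := T) (m := m) (.inr (.inl d)) (.inr (.inl e)) =
      if d = e then 0 else
      3 * T.dist d.fst e.fst + 2
        - 2 * (if T.dist e.fst d.snd < T.dist e.fst d.fst then 1 else 0)
        - 2 * (if T.dist d.fst e.snd < T.dist d.fst e.fst then 1 else 0) := by
  by_cases h : d = e
  · simp [D, h]
  · rw [D, if_neg (by simpa using h), if_neg h]
    simp only [anc, cst, ind]
    all_goals grind

lemma D_dart_leaf (d : T.Dart) (p : Σ v : V, Fin (m - T.degree v)) :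
    D (T := T) (m := m) (.inr (.inl d)) (.inr (.inr p)) =
      3 * T.dist d.fst p.1 + 2
        - 2 * (if T.dist p.1 d.snd < T.dist p.1 d.fst then 1 else 0) := by
  rw [D, if_neg (by simp)]
  simp only [anc, cst, ind]
  all_goals grind

lemma D_leaf_leaf (p q : Σ v : V, Fin (m - T.degree v)) :
    D (T := T) (m := m) (.inr (.inr p)) (.inr (.inr q)) =
      if p = q then 0 else 3 * T.dist p.1 q.1 + 2 := by
  by_cases h : p = q
  · simp [D, h]
  · rw [D, if_neg (by simpa using h), if_neg h]
    simp [anc, cst, ind]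

lemma D_dart_inl (d : T.Dart) (u : V) :
    D (T := T) (m := m) (.inr (.inl d)) (.inl u) =
      3 * T.dist d.fst u + 1 - 2 * (if T.dist u d.snd < T.dist u d.fst then 1 else 0) := by
  rw [D, if_neg (by simp)]
  simp [anc, cst, ind]
  grind

lemma D_leaf_inl (p : Σ v : V, Fin (m - T.degree v)) (u : V) :
    D (T := T) (m := m) (.inr (.inr p)) (.inl u) = 3 * T.dist p.1 u + 1 := by
  rw [D, if_neg (by simp)]
  simp [anc, cst, ind]

lemma D_leaf_dart (p : Σ v : V, Fin (m - T.degree v)) (d : T.Dart) :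
    D (T := T) (m := m) (.inr (.inr p)) (.inr (.inl d)) =
      3 * T.dist p.1 d.fst + 2
        - 2 * (if T.dist p.1 d.snd < T.dist p.1 d.fst then 1 else 0) := by
  rw [D, if_neg (by simp)]
  simp only [anc, cst, ind]
  all_goals grind

lemma lipC (p : Σ v : V, Fin (m - T.degree v))
    (x : (V ⊕ (T.Dart ⊕ (Σ v : V, Fin (m - T.degree v))))) :
    D x (.inr (.inr p)) ≤ D x (.inl p.1) + 1 ∧ D x (.inl p.1) ≤ D x (.inr (.inr p)) + 1 := by
  obtain (u | e | q) := x
  · rw [D_inl_leaf, D_inl_inl]; omega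
  · rw [D_dart_leaf, D_dart_inl]
    split_ifs <;> omega
  · rw [D_leaf_leaf, D_leaf_inl]
    by_cases h : q = p
    · subst h; simp
    · rw [if_neg h]
      omega

lemma lipA (hT : T.IsTree) (d : T.Dart)
    (x : (V ⊕ (T.Dart ⊕ (Σ v : V, Fin (m - T.degree v))))) :
    D x (.inr (.inl d)) ≤ D x (.inl d.fst) + 1 ∧
      D x (.inl d.fst) ≤ D x (.inr (.inl d)) + 1 := by
  obtain (u | e | q) := x
  · rw [D_inl_dart, D_inl_inl]
    have dich := tree_dist_dichotomy hT d.adj u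
    split_ifs <;> omega
  · by_cases he : e = d
    · subst he
      rw [D_self, D_dart_inl]
      have h0 : T.dist e.fst e.fst = 0 := by simp
      split_ifs <;> omega
    · rw [D_dart_dart, if_neg he, D_dart_inl]
      have hc : T.dist e.fst d.fst = T.dist d.fst e.fst := T.dist_comm
      have dich := tree_dist_dichotomy hT d.adj e.fst
      split_ifs <;> omega
  · rw [D_leaf_dart, D_leaf_inl]
    have dich := tree_dist_dichotomy hT d.adj q.1
    split_ifs <;> omega

lemma lipB (hT : T.IsTree) (d : T.Dart)
    (x : (V ⊕ (T.Dart ⊕ (Σ v : V, Fin (m - T.degree v))))) :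
    D x (.inr (.inl d.symm)) ≤ D x (.inr (.inl d)) + 1 := by
  have hth : T.dist d.fst d.snd = 1 := (T.dist_eq_one_iff_adj).mpr d.adj
  have hth' : T.dist d.snd d.fst = 1 := (T.dist_eq_one_iff_adj).mpr d.adj.symm
  obtain (u | e | q) := x
  · rw [D_inl_dart, D_inl_dart, dart_symm_fst, dart_symm_snd]
    have dich := tree_dist_dichotomy hT d.adj u
    split_ifs <;> omega
  · by_cases he1 : e = d
    · subst he1
      rw [D_self, D_dart_dart, if_neg (Ne.symm (Dart.symm_ne e)), dart_symm_fst, dart_symm_snd]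
      have h0 : T.dist e.fst e.fst = 0 := by simp
      have h0' : T.dist e.snd e.snd = 0 := by simp
      split_ifs <;> omega
    · by_cases he2 : e = d.symm
      · subst he2; rw [D_self]; omega
      · rw [D_dart_dart, if_neg he2, D_dart_dart, if_neg he1, dart_symm_fst, dart_symm_snd]
        have c1 : T.dist e.fst d.fst = T.dist d.fst e.fst := T.dist_comm
        have c2 : T.dist e.fst d.snd = T.dist d.snd e.fst := T.dist_comm
        have dich1 := tree_dist_dichotomy hT d.adj e.fst
        have dich2 := tree_dist_dichotomy hT d.adj e.snd
        have dich3 := tree_dist_dichotomy hT e.adj d.fst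
        have dich4 := tree_dist_dichotomy hT e.adj d.snd
        have c3 : T.dist e.fst d.fst = T.dist d.fst e.fst := T.dist_comm
        have c4 : T.dist e.snd d.fst = T.dist d.fst e.snd := T.dist_comm
        have c5 : T.dist e.snd d.snd = T.dist d.snd e.snd := T.dist_comm
        split_ifs <;> omega
  · rw [D_leaf_dart, D_leaf_dart, dart_symm_fst, dart_symm_snd]
    have dich := tree_dist_dichotomy hT d.adj q.1
    split_ifs <;> omega

lemma adj_inl_dart (d : T.Dart) : (vFractal T m).Adj (.inl d.fst) (.inr (.inl d)) := by
  rw [vFractal, SimpleGraph.fromRel_adj]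
  exact ⟨by simp, Or.inl rfl⟩

lemma adj_dart_symm (d : T.Dart) :
    (vFractal T m).Adj (.inr (.inl d)) (.inr (.inl d.symm)) := by
  rw [vFractal, SimpleGraph.fromRel_adj]
  refine ⟨by simpa using (Dart.symm_ne d).symm, Or.inl rfl⟩

lemma adj_inl_leaf (p : Σ v : V, Fin (m - T.degree v)) :
    (vFractal T m).Adj (.inl p.1) (.inr (.inr p)) := by
  rw [vFractal, SimpleGraph.fromRel_adj]
  exact ⟨by simp, Or.inl rfl⟩

lemma D_lip (hT : T.IsTree) {y z : (V ⊕ (T.Dart ⊕ (Σ v : V, Fin (m - T.degree v))))}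
    (h : (vFractal T m).Adj y z) (x : (V ⊕ (T.Dart ⊕ (Σ v : V, Fin (m - T.degree v))))) :
    D x z ≤ D x y + 1 := by
  rw [vFractal, SimpleGraph.fromRel_adj] at h
  obtain ⟨hne, hrel⟩ := h
  obtain (u | d | p) := y <;> obtain (u' | d' | p') := z
  · exact (hrel.elim id id).elim
  · obtain (h1 | h1) := hrel
    · subst h1; exact (lipA hT d' x).1
    · exact h1.elim
  · obtain (h1 | h1) := hrel
    · subst h1; exact (lipC p' x).1
    · exact h1.elim
  · obtain (h1 | h1) := hrel
    · exact h1.elim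
    · subst h1; exact (lipA hT d x).2
  · obtain (h1 | h1) := hrel
    · subst h1; exact lipB hT d x
    · subst h1
      simpa using lipB hT d'.symm x
  · exact (hrel.elim id id).elim
  · obtain (h1 | h1) := hrel
    · exact h1.elim
    · subst h1; exact (lipC p x).2
  · exact (hrel.elim id id).elim
  · exact (hrel.elim id id).elim

lemma D_decr (hT : T.IsTree) {x y : (V ⊕ (T.Dart ⊕ (Σ v : V, Fin (m - T.degree v))))}
    (hne : x ≠ y) : ∃ z, (vFractal T m).Adj y z ∧ D x z < D x y := by
  obtain (u | d | p) := y
  · -- y = inl u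
    by_cases hax : anc x = u
    · obtain (v | e | q) := x
      · exact absurd (by simpa [anc] using hax) (by simpa using hne)
      · -- x = dart e with e.fst = u
        refine ⟨.inr (.inl e), ?_, ?_⟩
        · have := adj_inl_dart (m := m) e
          rwa [(by simpa [anc] using hax : e.fst = u)] at this
        · rw [D_self, D_dart_inl]
          have h0 : T.dist u e.fst = 0 := by
            rw [(by simpa [anc] using hax : e.fst = u)]; simp
          split_ifs <;> omega
      · refine ⟨.inr (.inr q), ?_, ?_⟩
        · have := adj_inl_leaf (m := m) q
          rwa [(by simpa [anc] using hax : q.1 = u)] at this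
        · rw [D_self, D_leaf_inl]; omega
    · -- general move towards x
      obtain ⟨w, hadj, hw⟩ := exists_adj_closer hT.isConnected (Ne.symm hax)
      refine ⟨.inr (.inl ⟨(u, w), hadj⟩), ?_, ?_⟩
      · rw [vFractal, SimpleGraph.fromRel_adj]
        exact ⟨by simp, Or.inl rfl⟩
      · have hc1 : T.dist w (anc x) = T.dist (anc x) w := T.dist_comm
        have hc2 : T.dist u (anc x) = T.dist (anc x) u := T.dist_comm
        obtain (v | e | q) := x
        · rw [D_inl_dart, D_inl_inl]
          simp only [anc] at hc1 hc2 hax hw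
          dsimp only
          split_ifs <;> omega
        · have hne' : e ≠ (⟨(u, w), hadj⟩ : T.Dart) := by
            intro hcon
            exact hax (by rw [hcon]; rfl)
          rw [D_dart_dart, if_neg hne', D_dart_inl]
          simp only [anc] at hc1 hc2 hax hw
          dsimp only
          split_ifs <;> omega
        · rw [D_leaf_dart, D_leaf_inl]
          simp only [anc] at hc1 hc2 hax hw
          dsimp only
          split_ifs <;> omega
  · -- y = dart d
    have hth : T.dist d.fst d.snd = 1 := (T.dist_eq_one_iff_adj).mpr d.adj
    have hth' : T.dist d.snd d.fst = 1 := (T.dist_eq_one_iff_adj).mpr d.adj.symm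
    by_cases hx1 : x = .inl d.fst
    · refine ⟨.inl d.fst, (adj_inl_dart d).symm, ?_⟩
      subst hx1
      rw [D_self, D_inl_dart]
      have h0 : T.dist d.fst d.fst = 0 := by simp
      split_ifs <;> omega
    · by_cases hx2 : x = .inr (.inl d.symm)
      · refine ⟨.inr (.inl d.symm), adj_dart_symm d, ?_⟩
        subst hx2
        rw [D_self, D_dart_dart, if_neg (Dart.symm_ne d), dart_symm_fst, dart_symm_snd]
        have h0 : T.dist d.fst d.fst = 0 := by simp
        have h0' : T.dist d.snd d.snd = 0 := by simp
        split_ifs <;> omega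
      · by_cases hj : T.dist (anc x) d.snd < T.dist (anc x) d.fst
        · -- move to d.symm
          refine ⟨.inr (.inl d.symm), adj_dart_symm d, ?_⟩
          obtain (v | e | q) := x
          · rw [D_inl_dart, D_inl_dart, dart_symm_fst, dart_symm_snd]
            have dich := tree_dist_dichotomy hT d.adj v
            simp only [anc] at hj
            split_ifs <;> omega
          · have hne1 : e ≠ d := by rintro rfl; exact hne rfl
            have hne2 : e ≠ d.symm := by rintro rfl; exact hx2 rfl
            rw [D_dart_dart, if_neg hne2, D_dart_dart, if_neg hne1,
              dart_symm_fst, dart_symm_snd]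
            simp only [anc] at hj
            by_cases hcr : T.dist d.fst e.snd < T.dist d.fst e.fst ∧
                T.dist d.snd e.fst < T.dist d.snd e.snd
            · obtain ⟨heq1, heq2⟩ := ind_cross hT e.adj hcr.1 hcr.2 hth'
              exact absurd (Dart.ext e d.symm (Prod.ext heq1.symm heq2.symm)) hne2
            · have dich1 := tree_dist_dichotomy hT d.adj e.fst
              have dich2 := tree_dist_dichotomy hT d.adj e.snd
              have dich3 := tree_dist_dichotomy hT e.adj d.fst
              have dich4 := tree_dist_dichotomy hT e.adj d.snd
              have c1 : T.dist e.fst d.fst = T.dist d.fst e.fst := T.dist_comm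
              have c2 : T.dist e.fst d.snd = T.dist d.snd e.fst := T.dist_comm
              have c3 : T.dist e.snd d.fst = T.dist d.fst e.snd := T.dist_comm
              have c4 : T.dist e.snd d.snd = T.dist d.snd e.snd := T.dist_comm
              rw [not_and_or, not_lt, not_lt] at hcr
              split_ifs <;> omega
          · rw [D_leaf_dart, D_leaf_dart, dart_symm_fst, dart_symm_snd]
            have dich := tree_dist_dichotomy hT d.adj q.1
            simp only [anc] at hj
            split_ifs <;> omega
        · -- move to inl d.fst
          refine ⟨.inl d.fst, (adj_inl_dart d).symm, ?_⟩
          obtain (v | e | q) := x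
          · have hvu : v ≠ d.fst := by
              intro hcon; exact hx1 (by rw [hcon])
            rw [D_inl_inl, D_inl_dart]
            simp only [anc] at hj
            have hp : 0 < T.dist v d.fst := hT.isConnected.pos_dist_of_ne hvu
            split_ifs <;> omega
          · have hne1 : e ≠ d := by rintro rfl; exact hne rfl
            rw [D_dart_inl, D_dart_dart, if_neg hne1]
            simp only [anc] at hj
            have c1 : T.dist e.fst d.fst = T.dist d.fst e.fst := T.dist_comm
            split_ifs <;> omega
          · rw [D_leaf_inl, D_leaf_dart]
            simp only [anc] at hj
            split_ifs <;> omega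
  · -- y = leaf p
    refine ⟨.inl p.1, (adj_inl_leaf p).symm, ?_⟩
    obtain (v | e | q) := x
    · rw [D_inl_inl, D_inl_leaf]; omega
    · rw [D_dart_inl, D_dart_leaf]
      have c1 : T.dist e.fst p.1 = T.dist p.1 e.fst := T.dist_comm
      split_ifs <;> omega
    · have hqp : q ≠ p := by rintro rfl; exact hne rfl
      rw [D_leaf_inl, D_leaf_leaf, if_neg hqp]
      omega

lemma exists_walk_le_D (hT : T.IsTree) (x y : (V ⊕ (T.Dart ⊕ (Σ v : V, Fin (m - T.degree v))))) :
    ∃ p : (vFractal T m).Walk x y, p.length ≤ D x y := by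
  generalize hn : D x y = n
  induction n using Nat.strong_induction_on generalizing y with
  | _ n ih =>
    by_cases hxy : x = y
    · subst hxy; exact ⟨Walk.nil, by simp⟩
    · obtain ⟨z, hadj, hlt⟩ := D_decr hT hxy
      have hle := D_lip hT hadj.symm x
      obtain ⟨p, hp⟩ := ih (D x z) (by omega) z rfl
      exact ⟨p.concat hadj.symm, by rw [Walk.length_concat]; omega⟩

lemma D_le_walk (hT : T.IsTree) {x y : (V ⊕ (T.Dart ⊕ (Σ v : V, Fin (m - T.degree v))))}
    (p : (vFractal T m).Walk x y) : D x y ≤ p.length := by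
  induction p with
  | nil => simp [D_self]
  | @cons a b c h q ih =>
    have h1 := D_lip hT h.symm c
    rw [D_comm c b, D_comm c a] at h1
    rw [Walk.length_cons]
    omega

lemma dist_eq_D (hT : T.IsTree) (x y : (V ⊕ (T.Dart ⊕ (Σ v : V, Fin (m - T.degree v))))) :
    (vFractal T m).dist x y = D x y := by
  obtain ⟨p, hp⟩ := exists_walk_le_D hT x y
  refine le_antisymm (le_trans ((vFractal T m).dist_le p) hp) ?_
  obtain ⟨q, hq⟩ := (Reachable.exists_walk_length_eq_dist ⟨p⟩)
  rw [← hq]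
  exact D_le_walk hT q

section Sums

lemma ind_le_one (x : (V ⊕ (T.Dart ⊕ (Σ v : V, Fin (m - T.degree v))))) (w : V) :
    ind x w ≤ 1 := by
  obtain (v | e | q) := x <;> simp only [ind] <;> first | omega | (split_ifs <;> omega)

lemma ind_anc_self (x : (V ⊕ (T.Dart ⊕ (Σ v : V, Fin (m - T.degree v))))) :
    ind x (anc x) = 0 := by
  obtain (v | e | q) := x <;> simp [ind, anc, SimpleGraph.dist_self]

lemma trunc {x y : (V ⊕ (T.Dart ⊕ (Σ v : V, Fin (m - T.degree v))))} :
    2 * ind x (anc y) + 2 * ind y (anc x) ≤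
      3 * T.dist (anc x) (anc y) + cst x + cst y := by
  obtain (v | e | q) := x <;> obtain (v' | e' | q') := y <;>
    simp only [ind, anc, cst] <;>
    [skip; skip; skip; skip; skip; skip; skip; skip; skip] <;>
    first
      | omega
      | (have c1 : T.dist v' e.fst = T.dist e.fst v' := T.dist_comm
         grind)
      | (have c1 : T.dist e'.fst e.fst = T.dist e.fst e'.fst := T.dist_comm
         grind)
      | (have c1 : T.dist q'.1 e.fst = T.dist e.fst q'.1 := T.dist_comm
         grind)
      | grind

lemma D_cast {x y : (V ⊕ (T.Dart ⊕ (Σ v : V, Fin (m - T.degree v))))} (hne : x ≠ y) :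
    ((D x y : ℕ) : ℚ) = 3 * (T.dist (anc x) (anc y) : ℚ) + cst x + cst y
      - 2 * ind x (anc y) - 2 * ind y (anc x) := by
  have h := trunc (x := x) (y := y)
  rw [D, if_neg hne]
  have h2 : (2 : ℕ) * ind y (anc x) ≤
      3 * T.dist (anc x) (anc y) + cst x + cst y - 2 * ind x (anc y) := by omega
  rw [Nat.cast_sub h2, Nat.cast_sub (by omega)]
  push_cast
  ring

lemma sum_anc (hdeg : ∀ v : V, T.degree v ≤ m) (g : V → ℚ) :
    ∑ x : (V ⊕ (T.Dart ⊕ (Σ v : V, Fin (m - T.degree v)))), g (anc x)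
      = ((m : ℚ) + 1) * ∑ v, g v := by
  rw [Fintype.sum_sum_type, Fintype.sum_sum_type]
  simp only [anc]
  have hd : ∑ d : T.Dart, g d.fst = ∑ v, (T.degree v : ℚ) * g v := by
    rw [← Fintype.sum_fiberwise (fun d : T.Dart => d.fst) (fun d => g d.fst)]
    refine Finset.sum_congr rfl fun v _ => ?_
    have : ∀ d : {d : T.Dart // d.fst = v}, g d.1.fst = g v := fun d => by rw [d.2]
    rw [Fintype.sum_congr _ _ this, Finset.sum_const, Finset.card_univ, Fintype.card_subtype]
    rw [show (filter (fun d : T.Dart => d.fst = v) univ) = ({d : T.Dart | d.fst = v} : Finset _)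
        from rfl, T.dart_fst_fiber_card_eq_degree]
    rw [nsmul_eq_mul]
  have hl : ∑ p : (Σ v : V, Fin (m - T.degree v)), g p.1
      = ∑ v, ((m : ℚ) - T.degree v) * g v := by
    rw [← Finset.univ_sigma_univ, Finset.sum_sigma]
    refine Finset.sum_congr rfl fun v _ => ?_
    dsimp only
    rw [Finset.sum_const, Finset.card_univ, Fintype.card_fin]
    rw [nsmul_eq_mul, Nat.cast_sub (hdeg v)]
  rw [hd, hl, ← Finset.sum_add_distrib, ← Finset.sum_add_distrib]
  rw [Finset.mul_sum]
  refine Finset.sum_congr rfl fun v _ => ?_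
  ring

lemma sum_ind_dart (hT : T.IsTree) (w : V) :
    ∑ d : T.Dart, (if T.dist w d.snd < T.dist w d.fst then (1 : ℚ) else 0)
      = (#T.edgeFinset : ℚ) := by
  set f : T.Dart → ℚ :=
    fun d => (if T.dist w d.snd < T.dist w d.fst then (1 : ℚ) else 0) with hf
  have hsymm : ∑ d : T.Dart, f d.symm = ∑ d : T.Dart, f d :=
    Fintype.sum_equiv ⟨Dart.symm, Dart.symm, Dart.symm_symm, Dart.symm_symm⟩ _ _ (fun d => rfl)
  have hpair : ∀ d : T.Dart, f d + f d.symm = 1 := by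
    intro d
    have dich := tree_dist_dichotomy hT d.adj w
    simp only [hf, dart_symm_fst, dart_symm_snd]
    grind
  have h2 : (2 : ℚ) * ∑ d : T.Dart, f d = Fintype.card T.Dart := by
    rw [two_mul]
    nth_rewrite 2 [← hsymm]
    rw [← Finset.sum_add_distrib, Finset.sum_congr rfl (fun d _ => hpair d),
      Finset.sum_const, Finset.card_univ]
    simp
  have h3 : (Fintype.card T.Dart : ℚ) = 2 * (#T.edgeFinset : ℚ) := by
    rw [T.dart_card_eq_twice_card_edges]; push_cast; ring
  rw [h3] at h2
  linarith

lemma sum_ind (hT : T.IsTree) (w : V) :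
    ∑ x : (V ⊕ (T.Dart ⊕ (Σ v : V, Fin (m - T.degree v)))), ((ind x w : ℕ) : ℚ)
      = (#T.edgeFinset : ℚ) := by
  rw [Fintype.sum_sum_type, Fintype.sum_sum_type]
  simp only [ind, Nat.cast_zero, Finset.sum_const_zero, zero_add, add_zero]
  push_cast
  exact sum_ind_dart hT w

lemma sum_cst (hdeg : ∀ v : V, T.degree v ≤ m) :
    ∑ x : (V ⊕ (T.Dart ⊕ (Σ v : V, Fin (m - T.degree v)))), ((cst x : ℕ) : ℚ)
      = (m : ℚ) * Fintype.card V := by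
  rw [Fintype.sum_sum_type, Fintype.sum_sum_type]
  simp only [cst, Nat.cast_zero, Nat.cast_one, Finset.sum_const_zero, zero_add]
  rw [Finset.sum_const, Finset.sum_const, Finset.card_univ, Finset.card_univ,
    nsmul_eq_mul, nsmul_eq_mul, mul_one, mul_one]
  have h1 : (Fintype.card T.Dart : ℚ) = ∑ v, (T.degree v : ℚ) := by
    rw [T.dart_card_eq_sum_degrees]; push_cast; ring
  have h2 : (Fintype.card (Σ v : V, Fin (m - T.degree v)) : ℚ)
      = ∑ v, ((m : ℚ) - T.degree v) := by
    rw [Fintype.card_sigma]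
    push_cast
    refine Finset.sum_congr rfl fun v _ => ?_
    rw [Fintype.card_fin, Nat.cast_sub (hdeg v)]
  rw [h1, h2, ← Finset.sum_add_distrib]
  have h3 : ∀ v ∈ (univ : Finset V),
      (T.degree v : ℚ) + ((m : ℚ) - T.degree v) = (m : ℚ) := fun v _ => by ring
  rw [Finset.sum_congr rfl h3, Finset.sum_const, nsmul_eq_mul, Finset.card_univ]
  ring

end Sums

end Frac
end WVF


open WVF in
theorem wiener_vFractal {V : Type*} [Fintype V] [DecidableEq V] [Nonempty V]
    (T : SimpleGraph V) [DecidableRel T.Adj] (hT : T.IsTree)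
    (m : ℕ) (hdeg : ∀ v : V, T.degree v ≤ m) :
    wienerIndex (vFractal T m) =
      3 * ((m : ℚ) + 1) ^ 2 * wienerIndex T
        + ((m : ℚ) - 2) * ((m : ℚ) + 1) * (Fintype.card V : ℚ) ^ 2
        + ((m : ℚ) + 2) * (Fintype.card V : ℚ) := by
  classical
  set n : ℚ := (Fintype.card V : ℚ) with hn
  set SD : ℚ := ∑ u : V, ∑ v : V, (T.dist u v : ℚ) with hSD
  set E : ℚ := (#T.edgeFinset : ℚ) with hEdef
  have hE : E + 1 = n := by
    rw [hEdef, hn, ← hT.card_edgeFinset]; push_cast; ring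
  have hone : ∑ _y : (V ⊕ (T.Dart ⊕ (Σ v : V, Fin (m - T.degree v)))), (1 : ℚ)
      = ((m : ℚ) + 1) * n := by
    have := sum_anc (T := T) hdeg (fun _ => (1 : ℚ))
    simpa [hn] using this
  have hxy : ∀ x y : (V ⊕ (T.Dart ⊕ (Σ v : V, Fin (m - T.degree v)))),
      (((vFractal T m).dist x y : ℕ) : ℚ)
      = (3 * (T.dist (anc x) (anc y) : ℚ) + (cst x : ℚ) + (cst y : ℚ)
          - 2 * (ind x (anc y) : ℚ) - 2 * (ind y (anc x) : ℚ))
        - (if x = y then 2 * (cst x : ℚ) else 0) := by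
    intro x y
    by_cases h : x = y
    · subst h
      rw [dist_eq_D hT, D_self, if_pos rfl, ind_anc_self, SimpleGraph.dist_self]
      push_cast
      ring
    · rw [dist_eq_D hT, D_cast h, if_neg h]
      ring
  have hrow : ∀ x : (V ⊕ (T.Dart ⊕ (Σ v : V, Fin (m - T.degree v)))),
      ∑ y : (V ⊕ (T.Dart ⊕ (Σ v : V, Fin (m - T.degree v)))), (3 * (T.dist (anc x) (anc y) : ℚ) + (cst x : ℚ) + (cst y : ℚ)
          - 2 * (ind x (anc y) : ℚ) - 2 * (ind y (anc x) : ℚ))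
      = 3 * ((m : ℚ) + 1) * (∑ v, (T.dist (anc x) v : ℚ))
        + (((m : ℚ) + 1) * n) * (cst x : ℚ) + (m : ℚ) * n
        - 2 * ((m : ℚ) + 1) * (∑ w, (ind x w : ℚ)) - 2 * E := by
    intro x
    have e1 : ∑ y : (V ⊕ (T.Dart ⊕ (Σ v : V, Fin (m - T.degree v)))), (T.dist (anc x) (anc y) : ℚ)
        = ((m : ℚ) + 1) * ∑ v, (T.dist (anc x) v : ℚ) :=
      sum_anc hdeg (fun v => (T.dist (anc x) v : ℚ))
    have e2 : ∑ y : (V ⊕ (T.Dart ⊕ (Σ v : V, Fin (m - T.degree v)))), (cst y : ℚ)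
        = (m : ℚ) * Fintype.card V := sum_cst hdeg
    have e3 : ∑ y : (V ⊕ (T.Dart ⊕ (Σ v : V, Fin (m - T.degree v)))), (ind x (anc y) : ℚ)
        = ((m : ℚ) + 1) * ∑ w, (ind x w : ℚ) :=
      sum_anc hdeg (fun w => (ind x w : ℚ))
    have e4 : ∑ y : (V ⊕ (T.Dart ⊕ (Σ v : V, Fin (m - T.degree v)))),
        (ind y (anc x) : ℚ) = (#T.edgeFinset : ℚ) := sum_ind hT (anc x)
    calc ∑ y : (V ⊕ (T.Dart ⊕ (Σ v : V, Fin (m - T.degree v)))), (3 * (T.dist (anc x) (anc y) : ℚ) + (cst x : ℚ) + (cst y : ℚ)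
          - 2 * (ind x (anc y) : ℚ) - 2 * (ind y (anc x) : ℚ))
        = 3 * (∑ y : (V ⊕ (T.Dart ⊕ (Σ v : V, Fin (m - T.degree v)))), (T.dist (anc x) (anc y) : ℚ))
          + (∑ _y : (V ⊕ (T.Dart ⊕ (Σ v : V, Fin (m - T.degree v)))), (1 : ℚ)) * (cst x : ℚ)
          + (∑ y : (V ⊕ (T.Dart ⊕ (Σ v : V, Fin (m - T.degree v)))), (cst y : ℚ))
          - 2 * (∑ y : (V ⊕ (T.Dart ⊕ (Σ v : V, Fin (m - T.degree v)))), (ind x (anc y) : ℚ))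
          - 2 * (∑ y : (V ⊕ (T.Dart ⊕ (Σ v : V, Fin (m - T.degree v)))), (ind y (anc x) : ℚ)) := by
          rw [Finset.mul_sum, Finset.sum_mul, Finset.mul_sum, Finset.mul_sum,
            ← Finset.sum_add_distrib, ← Finset.sum_add_distrib,
            ← Finset.sum_sub_distrib, ← Finset.sum_sub_distrib]
          exact Finset.sum_congr rfl fun y _ => by ring
      _ = _ := by rw [e1, e2, e3, e4, hone, ← hn, ← hEdef]; ring
  have hmain : ∑ x : (V ⊕ (T.Dart ⊕ (Σ v : V, Fin (m - T.degree v)))),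
      (3 * ((m : ℚ) + 1) * (∑ v, (T.dist (anc x) v : ℚ))
        + (((m : ℚ) + 1) * n) * (cst x : ℚ) + (m : ℚ) * n
        - 2 * ((m : ℚ) + 1) * (∑ w, (ind x w : ℚ)) - 2 * E)
      = 3 * ((m : ℚ) + 1) ^ 2 * SD + 2 * (((m : ℚ) + 1) * n) * ((m : ℚ) * n)
        - 2 * ((m : ℚ) + 1) * (n * E) - (((m : ℚ) + 1) * n) * (2 * E) := by
    have f1 : ∑ x, (∑ v, (T.dist (anc x) v : ℚ))
        = ((m : ℚ) + 1) * ∑ u, ∑ v, (T.dist u v : ℚ) :=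
      sum_anc hdeg (fun u => ∑ v, (T.dist u v : ℚ))
    have f2 : ∑ x : (V ⊕ (T.Dart ⊕ (Σ v : V, Fin (m - T.degree v)))), (cst x : ℚ)
        = (m : ℚ) * Fintype.card V := sum_cst hdeg
    have f3 : ∑ x : (V ⊕ (T.Dart ⊕ (Σ v : V, Fin (m - T.degree v)))),
        (∑ w, (ind x w : ℚ)) = n * E := by
      rw [Finset.sum_comm, Finset.sum_congr rfl fun w _ => sum_ind hT w,
        Finset.sum_const, Finset.card_univ, nsmul_eq_mul, hn, hEdef]
    calc ∑ x : (V ⊕ (T.Dart ⊕ (Σ v : V, Fin (m - T.degree v)))),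
        (3 * ((m : ℚ) + 1) * (∑ v, (T.dist (anc x) v : ℚ))
          + (((m : ℚ) + 1) * n) * (cst x : ℚ) + (m : ℚ) * n
          - 2 * ((m : ℚ) + 1) * (∑ w, (ind x w : ℚ)) - 2 * E)
        = 3 * ((m : ℚ) + 1) * (∑ x, (∑ v, (T.dist (anc x) v : ℚ)))
          + (((m : ℚ) + 1) * n)
            * (∑ x : (V ⊕ (T.Dart ⊕ (Σ v : V, Fin (m - T.degree v)))), (cst x : ℚ))
          + (∑ _x : (V ⊕ (T.Dart ⊕ (Σ v : V, Fin (m - T.degree v)))), (1 : ℚ)) * ((m : ℚ) * n)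
          - 2 * ((m : ℚ) + 1)
            * (∑ x : (V ⊕ (T.Dart ⊕ (Σ v : V, Fin (m - T.degree v)))), (∑ w, (ind x w : ℚ)))
          - (∑ _x : (V ⊕ (T.Dart ⊕ (Σ v : V, Fin (m - T.degree v)))), (1 : ℚ)) * (2 * E) := by
          rw [Finset.mul_sum, Finset.mul_sum, Finset.sum_mul, Finset.mul_sum, Finset.sum_mul,
            ← Finset.sum_add_distrib, ← Finset.sum_add_distrib,
            ← Finset.sum_sub_distrib, ← Finset.sum_sub_distrib]
          exact Finset.sum_congr rfl fun x _ => by ring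
      _ = _ := by rw [f1, f2, f3, hone, ← hn, ← hSD]; ring
  have hdiag : ∑ x : (V ⊕ (T.Dart ⊕ (Σ v : V, Fin (m - T.degree v)))),
      (∑ y : (V ⊕ (T.Dart ⊕ (Σ v : V, Fin (m - T.degree v)))), (if x = y then 2 * (cst x : ℚ) else 0)) = 2 * ((m : ℚ) * n) := by
    have h1 : ∀ x : (V ⊕ (T.Dart ⊕ (Σ v : V, Fin (m - T.degree v)))),
        (∑ y : (V ⊕ (T.Dart ⊕ (Σ v : V, Fin (m - T.degree v)))), (if x = y then 2 * (cst x : ℚ) else 0)) = 2 * (cst x : ℚ) := by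
      intro x
      rw [Finset.sum_ite_eq]
      simp
    rw [Finset.sum_congr rfl fun x _ => h1 x, ← Finset.mul_sum, sum_cst hdeg, hn]
  have hS : ∑ x, ∑ y, (((vFractal T m).dist x y : ℕ) : ℚ)
      = 3 * ((m : ℚ) + 1) ^ 2 * SD + 2 * (((m : ℚ) + 1) * n) * ((m : ℚ) * n)
        - 4 * ((m : ℚ) + 1) * n * E - 2 * ((m : ℚ) * n) := by
    calc ∑ x, ∑ y, (((vFractal T m).dist x y : ℕ) : ℚ)
        = ∑ x : (V ⊕ (T.Dart ⊕ (Σ v : V, Fin (m - T.degree v)))),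
            ((∑ y : (V ⊕ (T.Dart ⊕ (Σ v : V, Fin (m - T.degree v)))), (3 * (T.dist (anc x) (anc y) : ℚ) + (cst x : ℚ) + (cst y : ℚ)
              - 2 * (ind x (anc y) : ℚ) - 2 * (ind y (anc x) : ℚ)))
            - (∑ y : (V ⊕ (T.Dart ⊕ (Σ v : V, Fin (m - T.degree v)))), (if x = y then 2 * (cst x : ℚ) else 0))) := by
          refine Finset.sum_congr rfl fun x _ => ?_
          rw [← Finset.sum_sub_distrib]
          exact Finset.sum_congr rfl fun y _ => hxy x y
      _ = (∑ x : (V ⊕ (T.Dart ⊕ (Σ v : V, Fin (m - T.degree v)))),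
            (∑ y : (V ⊕ (T.Dart ⊕ (Σ v : V, Fin (m - T.degree v)))), (3 * (T.dist (anc x) (anc y) : ℚ) + (cst x : ℚ) + (cst y : ℚ)
              - 2 * (ind x (anc y) : ℚ) - 2 * (ind y (anc x) : ℚ))))
          - (∑ x : (V ⊕ (T.Dart ⊕ (Σ v : V, Fin (m - T.degree v)))),
            (∑ y : (V ⊕ (T.Dart ⊕ (Σ v : V, Fin (m - T.degree v)))), (if x = y then 2 * (cst x : ℚ) else 0))) := Finset.sum_sub_distrib _ _
      _ = _ := by
          rw [Finset.sum_congr rfl fun x _ => hrow x, hmain, hdiag]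
          ring
  have hWT : wienerIndex T = SD / 2 := by rw [wienerIndex, hSD]
  have hE' : E = n - 1 := by linarith
  rw [wienerIndex, hS, hWT, hE']
  ring
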